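/- The infimum over continuous non-decreasing functions g: ℝ → ℝ of W₂²(g#μ, ν), with μ = U([-1,1]) and ν = ½U([-2,-1]) + ½U([1,2]), equals 0 but is not attained; i.e., the problem argmin_{g continuous non-decreasing} W₂²(g#μ, ν) has no solution. -/

import Mathlib

open Set MeasureTheory
open scoped ENNReal

/-- Squared 2-Wasserstein cost between measures on ℝ. -/
noncomputable def W2sq (ρ₁ ρ₂ : MeasureTheory.Measure ℝ) : ℝ≥0∞ :=
  ⨅ π ∈ {π : MeasureTheory.Measure (ℝ × ℝ) |
      π.map Prod.fst = ρ₁ ∧ π.map Prod.snd = ρ₂},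
    ∫⁻ q, ENNReal.ofReal ((q.1 - q.2) ^ 2) ∂π

/-- The uniform probability measure on [-1,1]. -/
noncomputable def muUnif : MeasureTheory.Measure ℝ :=
  (2 : ℝ≥0∞)⁻¹ • MeasureTheory.volume.restrict (Set.Icc (-1 : ℝ) 1)

/-- The measure ½ U([-2,-1]) + ½ U([1,2]). -/
noncomputable def nuTarget : MeasureTheory.Measure ℝ :=
  (2 : ℝ≥0∞)⁻¹ • MeasureTheory.volume.restrict (Set.Icc (-2 : ℝ) (-1)) +
  (2 : ℝ≥0∞)⁻¹ • MeasureTheory.volume.restrict (Set.Icc (1 : ℝ) 2)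

/-! ### Auxiliary definitions and lemmas -/

/-- The discontinuous optimal transport map. -/
noncomputable def Tmap (x : ℝ) : ℝ := if x ≤ 0 then x - 1 else x + 1

lemma Tmap_meas : Measurable Tmap :=
  Measurable.ite measurableSet_Iic (measurable_id.sub_const 1) (measurable_id.add_const 1)

lemma shift_Icc (c a b : ℝ) :
    Measure.map (fun x => x + c) (volume.restrict (Icc a b))
      = volume.restrict (Icc (a + c) (b + c)) := by
  ext t ht
  rw [Measure.map_apply (measurable_add_const c) ht, Measure.restrict_apply ht,
    Measure.restrict_apply (ht.preimage (measurable_add_const c))]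
  have h : (fun x => x + c) ⁻¹' t ∩ Icc a b = (fun x => x + c) ⁻¹' (t ∩ Icc (a + c) (b + c)) := by
    rw [Set.preimage_inter, Set.preimage_add_const_Icc]; norm_num
  rw [h, measure_preimage_add_right]

lemma map_Tmap : Measure.map Tmap muUnif = nuTarget := by
  have hsplit : volume.restrict (Icc (-1:ℝ) 1)
      = volume.restrict (Icc (-1:ℝ) 0) + volume.restrict (Ioc (0:ℝ) 1) := by
    rw [← Measure.restrict_union ((Set.Iic_disjoint_Ioc le_rfl).mono Set.Icc_subset_Iic_self
        le_rfl) measurableSet_Ioc,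
      Set.Icc_union_Ioc_eq_Icc (by norm_num) (by norm_num)]
  have h1 : Measure.map Tmap (volume.restrict (Icc (-1:ℝ) 0))
      = volume.restrict (Icc (-2:ℝ) (-1)) := by
    have h : Measure.map Tmap (volume.restrict (Icc (-1:ℝ) 0))
        = Measure.map (fun x => x + (-1)) (volume.restrict (Icc (-1:ℝ) 0)) := by
      apply Measure.map_congr
      filter_upwards [ae_restrict_mem measurableSet_Icc] with x hx
      simp [Tmap, hx.2, sub_eq_add_neg]
    rw [h, shift_Icc]; norm_num
  have h2 : Measure.map Tmap (volume.restrict (Ioc (0:ℝ) 1))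
      = volume.restrict (Icc (1:ℝ) 2) := by
    have h : Measure.map Tmap (volume.restrict (Ioc (0:ℝ) 1))
        = Measure.map (fun x => x + 1) (volume.restrict (Ioc (0:ℝ) 1)) := by
      apply Measure.map_congr
      filter_upwards [ae_restrict_mem measurableSet_Ioc] with x hx
      simp [Tmap, not_le.mpr hx.1]
    rw [h, Measure.restrict_congr_set Ioc_ae_eq_Icc, shift_Icc]; norm_num
  rw [muUnif, Measure.map_smul, hsplit, Measure.map_add _ _ Tmap_meas, h1, h2, nuTarget,
    smul_add]

/-- Continuous monotone approximation of `Tmap`. -/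
noncomputable def gApprox (δ : ℝ) (x : ℝ) : ℝ := x + max (-1) (min 1 (x / δ))

lemma gApprox_cont (δ : ℝ) : Continuous (gApprox δ) := by
  unfold gApprox; fun_prop

lemma gApprox_mono {δ : ℝ} (hδ : 0 < δ) : Monotone (gApprox δ) := by
  intro a b hab
  have h : a / δ ≤ b / δ := by gcongr
  exact add_le_add hab (max_le_max le_rfl (min_le_min le_rfl h))

lemma gApprox_eq_T {δ x : ℝ} (hδ : 0 < δ) (hx : δ ≤ |x|) : gApprox δ x = Tmap x := by
  unfold Tmap
  rcases le_abs.mp hx with h | h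
  · have hx1 : ¬ x ≤ 0 := by nlinarith
    have h' : (1:ℝ) ≤ x / δ := (one_le_div hδ).mpr h
    simp only [gApprox, hx1, if_false, min_eq_left h',
      max_eq_right (by norm_num : (-1:ℝ) ≤ 1)]
  · have hx1 : x ≤ 0 := by nlinarith
    have h' : x / δ ≤ -1 := by rw [div_le_iff₀ hδ]; linarith
    simp only [gApprox, hx1, if_true]
    rw [min_eq_right (by linarith : x/δ ≤ 1), max_eq_left h', sub_eq_add_neg]

lemma gApprox_diff_le (δ x : ℝ) : |gApprox δ x - Tmap x| ≤ 2 := by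
  have h1 : -1 ≤ max (-1) (min 1 (x / δ)) := le_max_left _ _
  have h2 : max (-1) (min 1 (x / δ)) ≤ 1 := max_le (by norm_num) (min_le_left _ _)
  unfold gApprox Tmap
  split <;> rw [abs_le] <;> constructor <;> linarith

lemma mu_univ : muUnif univ = 1 := by
  simp [muUnif, Real.volume_Icc]
  rw [show (1:ℝ) + 1 = 2 by norm_num, ENNReal.ofReal_ofNat]
  simp [ENNReal.inv_mul_cancel]

lemma nu_Ioo : nuTarget (Ioo (-1) 1) = 0 := by
  have h1 : Ioo (-1:ℝ) 1 ∩ Icc (-2) (-1) = ∅ := by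
    rw [eq_empty_iff_forall_notMem]; rintro x ⟨⟨h1,_⟩,⟨_,h2⟩⟩; linarith
  have h2 : Ioo (-1:ℝ) 1 ∩ Icc 1 2 = ∅ := by
    rw [eq_empty_iff_forall_notMem]; rintro x ⟨⟨_,h1⟩,⟨h2,_⟩⟩; linarith
  simp [nuTarget, Measure.restrict_apply measurableSet_Ioo, h1, h2]

lemma nu_Icc12 : nuTarget (Icc 1 2) = 2⁻¹ := by
  have h1 : Icc (1:ℝ) 2 ∩ Icc (-2) (-1) = ∅ := by
    rw [eq_empty_iff_forall_notMem]; rintro x ⟨⟨h1,_⟩,⟨_,h2⟩⟩; linarith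
  simp [nuTarget, Measure.restrict_apply measurableSet_Icc, h1, Real.volume_Icc]
  rw [show (2:ℝ) - 1 = 1 by norm_num, ENNReal.ofReal_one, mul_one]

lemma nu_Icc_neg : nuTarget (Icc (-2) (-1)) = 2⁻¹ := by
  have h1 : Icc (-2:ℝ) (-1) ∩ Icc 1 2 = ∅ := by
    rw [eq_empty_iff_forall_notMem]; rintro x ⟨⟨_,h1⟩,⟨h2,_⟩⟩; linarith
  simp [nuTarget, Measure.restrict_apply measurableSet_Icc, h1, Real.volume_Icc]
  rw [show (-1:ℝ) + 2 = 1 by norm_num, ENNReal.ofReal_one, mul_one]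

lemma cost_lb (π : Measure (ℝ×ℝ)) (A B : Set ℝ) (hA : MeasurableSet A) (hB : MeasurableSet B)
    (hd : ∀ x ∈ A, ∀ y ∈ B, (4:ℝ)⁻¹ ≤ (x - y)^2) :
    ENNReal.ofReal 4⁻¹ * π (A ×ˢ B) ≤ ∫⁻ q, ENNReal.ofReal ((q.1 - q.2)^2) ∂π := by
  rw [← lintegral_indicator_const (hA.prod hB)]
  apply lintegral_mono
  intro q
  by_cases hq : q ∈ A ×ˢ B
  · rw [Set.indicator_of_mem hq]
    exact ENNReal.ofReal_le_ofReal (hd q.1 hq.1 q.2 hq.2)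
  · rw [Set.indicator_of_notMem hq]; exact zero_le

lemma prod_bound1 (π : Measure (ℝ×ℝ)) (ρ₁ ρ₂ : Measure ℝ)
    (h1 : π.map Prod.fst = ρ₁) (h2 : π.map Prod.snd = ρ₂)
    (A B : Set ℝ) (hA : MeasurableSet A) (hB : MeasurableSet B)
    (hc : ρ₂ Bᶜ = 0) : ρ₁ A ≤ π (A ×ˢ B) := by
  have hu : π (A ×ˢ univ) = ρ₁ A := by
    rw [Set.prod_univ, ← Measure.map_apply measurable_fst hA, h1]
  have hv : π (univ ×ˢ Bᶜ) = 0 := by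
    rw [Set.univ_prod, ← Measure.map_apply measurable_snd hB.compl, h2, hc]
  have hsub : A ×ˢ univ ⊆ (A ×ˢ B) ∪ (univ ×ˢ Bᶜ) := by
    rintro ⟨x, y⟩ ⟨hx, -⟩
    by_cases hy : y ∈ B
    · exact Or.inl ⟨hx, hy⟩
    · exact Or.inr ⟨trivial, hy⟩
  calc ρ₁ A = π (A ×ˢ univ) := hu.symm
    _ ≤ π (A ×ˢ B) + π (univ ×ˢ Bᶜ) := (measure_mono hsub).trans (measure_union_le _ _)
    _ = π (A ×ˢ B) := by rw [hv, add_zero]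

lemma prod_bound2 (π : Measure (ℝ×ℝ)) (ρ₁ ρ₂ : Measure ℝ)
    (h1 : π.map Prod.fst = ρ₁) (h2 : π.map Prod.snd = ρ₂)
    (A B : Set ℝ) (hA : MeasurableSet A) (hB : MeasurableSet B)
    (hc : ρ₁ Aᶜ = 0) : ρ₂ B ≤ π (A ×ˢ B) := by
  have hu : π (univ ×ˢ B) = ρ₂ B := by
    rw [Set.univ_prod, ← Measure.map_apply measurable_snd hB, h2]
  have hv : π (Aᶜ ×ˢ univ) = 0 := by
    rw [Set.prod_univ, ← Measure.map_apply measurable_fst hA.compl, h1, hc]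
  have hsub : univ ×ˢ B ⊆ (A ×ˢ B) ∪ (Aᶜ ×ˢ univ) := by
    rintro ⟨x, y⟩ ⟨-, hy⟩
    by_cases hx : x ∈ A
    · exact Or.inl ⟨hx, hy⟩
    · exact Or.inr ⟨hx, trivial⟩
  calc ρ₂ B = π (univ ×ˢ B) := hu.symm
    _ ≤ π (A ×ˢ B) + π (Aᶜ ×ˢ univ) := (measure_mono hsub).trans (measure_union_le _ _)
    _ = π (A ×ˢ B) := by rw [hv, add_zero]

/-- The approximation bound: W2sq of the pushforward by `gApprox δ` is at most `4δ`. -/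
lemma W2sq_gApprox_le {δ : ℝ} (hδ : 0 < δ) :
    W2sq (Measure.map (gApprox δ) muUnif) nuTarget ≤ ENNReal.ofReal (4 * δ) := by
  set π : Measure (ℝ × ℝ) := muUnif.map (fun x => (gApprox δ x, Tmap x)) with hπ
  have hpair : Measurable (fun x => (gApprox δ x, Tmap x)) :=
    ((gApprox_cont δ).measurable).prodMk Tmap_meas
  have hm1 : π.map Prod.fst = Measure.map (gApprox δ) muUnif := by
    rw [hπ, Measure.map_map measurable_fst hpair]; rfl
  have hm2 : π.map Prod.snd = nuTarget := by
    rw [hπ, Measure.map_map measurable_snd hpair]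
    exact map_Tmap
  have hcost : (∫⁻ q, ENNReal.ofReal ((q.1 - q.2) ^ 2) ∂π) ≤ ENNReal.ofReal (4 * δ) := by
    rw [hπ, lintegral_map (by fun_prop) hpair]
    have hb : ∀ x : ℝ, ENNReal.ofReal ((gApprox δ x - Tmap x) ^ 2)
        ≤ Set.indicator (Ioo (-δ) δ) (fun _ => (4:ℝ≥0∞)) x := by
      intro x
      by_cases hx : x ∈ Ioo (-δ) δ
      · rw [Set.indicator_of_mem hx]
        have h2 := gApprox_diff_le δ x
        rw [abs_le] at h2
        calc ENNReal.ofReal ((gApprox δ x - Tmap x) ^ 2) ≤ ENNReal.ofReal 4 :=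
              ENNReal.ofReal_le_ofReal (by nlinarith)
          _ = 4 := by rw [ENNReal.ofReal_ofNat]
      · rw [Set.indicator_of_notMem hx]
        have hδx : δ ≤ |x| := by
          rw [Set.mem_Ioo, not_and_or] at hx
          rcases hx with h | h
          · push_neg at h; rw [abs_of_nonpos (by linarith)]; linarith
          · push_neg at h; rw [abs_of_nonneg (by linarith)]; linarith
        rw [gApprox_eq_T hδ hδx]
        simp
    calc (∫⁻ x, ENNReal.ofReal ((gApprox δ x - Tmap x) ^ 2) ∂muUnif)
        ≤ ∫⁻ x, Set.indicator (Ioo (-δ) δ) (fun _ => (4:ℝ≥0∞)) x ∂muUnif :=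
          lintegral_mono hb
      _ = 4 * muUnif (Ioo (-δ) δ) := lintegral_indicator_const measurableSet_Ioo _
      _ ≤ 4 * (2⁻¹ * volume (Ioo (-δ) δ)) := by
          rw [muUnif]
          simp only [Measure.smul_apply, smul_eq_mul]
          gcongr
          exact Measure.restrict_le_self
      _ = ENNReal.ofReal (4 * δ) := by
          rw [Real.volume_Ioo]
          rw [show δ - -δ = 2 * δ by ring]
          rw [← mul_assoc]
          rw [show (4:ℝ≥0∞) * 2⁻¹ = 2 by
            rw [show (4:ℝ≥0∞) = 2 * 2 by norm_num, mul_assoc, ENNReal.mul_inv_cancel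
              (by norm_num) (by norm_num), mul_one]]
          rw [show (2:ℝ≥0∞) = ENNReal.ofReal 2 by simp, ← ENNReal.ofReal_mul (by norm_num)]
          ring_nf
  calc W2sq (Measure.map (gApprox δ) muUnif) nuTarget
      ≤ ∫⁻ q, ENNReal.ofReal ((q.1 - q.2) ^ 2) ∂π := iInf₂_le π ⟨hm1, hm2⟩
    _ ≤ ENNReal.ofReal (4 * δ) := hcost

set_option maxHeartbeats 2000000 in
theorem inf_zero_not_attained :
    (⨅ g : {g : ℝ → ℝ // Continuous g ∧ Monotone g},
        W2sq (MeasureTheory.Measure.map g.1 muUnif) nuTarget) = 0 ∧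
    ¬ ∃ g : ℝ → ℝ, Continuous g ∧ Monotone g ∧
        W2sq (MeasureTheory.Measure.map g muUnif) nuTarget = 0 := by
  constructor
  · -- infimum is zero
    refine le_antisymm (ENNReal.le_of_forall_pos_le_add fun ε hε _ => ?_) zero_le
    rw [zero_add]
    have hδ : (0:ℝ) < ε / 8 := by positivity
    calc (⨅ g : {g : ℝ → ℝ // Continuous g ∧ Monotone g},
          W2sq (Measure.map g.1 muUnif) nuTarget)
        ≤ W2sq (Measure.map (gApprox (ε/8)) muUnif) nuTarget :=
          iInf_le _ (⟨gApprox (ε/8), gApprox_cont _, gApprox_mono hδ⟩ : {g : ℝ → ℝ // Continuous g ∧ Monotone g})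
      _ ≤ ENNReal.ofReal (4 * (ε/8)) := W2sq_gApprox_le hδ
      _ ≤ (ε : ℝ≥0∞) := by
          rw [show (ε:ℝ≥0∞) = ENNReal.ofReal ε by simp]
          apply ENNReal.ofReal_le_ofReal
          have : (0:ℝ) ≤ ε := ε.2
          linarith
  · -- not attained
    rintro ⟨g, hgc, hgm, h0⟩
    -- produce a positive lower bound on the cost of every coupling
    obtain ⟨m, hm, hbound⟩ : ∃ m : ℝ≥0∞, 0 < m ∧
        ∀ π : Measure (ℝ × ℝ), π.map Prod.fst = Measure.map g muUnif →
          π.map Prod.snd = nuTarget →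
          m ≤ ∫⁻ q, ENNReal.ofReal ((q.1 - q.2) ^ 2) ∂π := by
      by_cases hcase : ∃ c ∈ Icc (-1:ℝ) 1, |g c| < 2⁻¹
      · obtain ⟨c, hc, hgc2⟩ := hcase
        -- continuity gives a neighbourhood on which |g| < 1/2
        obtain ⟨δ, hδpos, hδ⟩ := Metric.continuousAt_iff.mp (hgc.continuousAt (x := c))
          (2⁻¹ - |g c|) (by linarith)
        set δ' : ℝ := min (δ/2) 1 with hδ'def
        have hδ'pos : 0 < δ' := lt_min (by linarith) one_pos
        have hδ'le : δ' ≤ δ/2 := min_le_left _ _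
        have hδ'le1 : δ' ≤ 1 := min_le_right _ _
        -- the interval J
        have hJ : ∃ a b : ℝ, a < b ∧ b - a = δ' ∧ Icc a b ⊆ Icc (-1:ℝ) 1 ∧
            ∀ x ∈ Icc a b, |g x| < 2⁻¹ := by
          have hsmall : ∀ x : ℝ, |x - c| ≤ δ' → |g x| < 2⁻¹ := by
            intro x hx
            have hdist := hδ (x := x) (by rw [Real.dist_eq]; linarith)
            rw [Real.dist_eq] at hdist
            calc |g x| = |(g x - g c) + g c| := by ring_nf
              _ ≤ |g x - g c| + |g c| := abs_add_le _ _
              _ < (2⁻¹ - |g c|) + |g c| := by linarith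
              _ = 2⁻¹ := by ring
          obtain ⟨hc1, hc2⟩ := hc
          rcases le_or_gt c 0 with h | h
          · refine ⟨c, c + δ', by linarith, by ring, ?_, ?_⟩
            · rintro x ⟨hx1, hx2⟩
              exact ⟨by linarith, by linarith⟩
            · rintro x ⟨hx1, hx2⟩
              exact hsmall x (by rw [abs_le]; constructor <;> linarith)
          · refine ⟨c - δ', c, by linarith, by ring, ?_, ?_⟩
            · rintro x ⟨hx1, hx2⟩
              exact ⟨by linarith, by linarith⟩
            · rintro x ⟨hx1, hx2⟩
              exact hsmall x (by rw [abs_le]; constructor <;> linarith)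
        obtain ⟨a, b, hab, hba, hsub, habs⟩ := hJ
        refine ⟨ENNReal.ofReal 4⁻¹ * (2⁻¹ * ENNReal.ofReal δ'), ?_, ?_⟩
        · apply ENNReal.mul_pos
          · simp
          · have : (0:ℝ≥0∞) < 2⁻¹ * ENNReal.ofReal δ' := by
              apply ENNReal.mul_pos
              · simp
              · simp [ENNReal.ofReal_pos, hδ'pos]
            exact this.ne'
        · intro π h1 h2
          have hA : MeasurableSet (Ioo (-2⁻¹:ℝ) 2⁻¹) := measurableSet_Ioo
          have hB : MeasurableSet (Ioo (-1:ℝ) 1)ᶜ := measurableSet_Ioo.compl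
          have hmass : 2⁻¹ * ENNReal.ofReal δ' ≤ (Measure.map g muUnif) (Ioo (-2⁻¹:ℝ) 2⁻¹) := by
            rw [Measure.map_apply hgc.measurable hA, muUnif]
            simp only [Measure.smul_apply, smul_eq_mul]
            gcongr
            rw [Measure.restrict_apply (hA.preimage hgc.measurable)]
            have hsub2 : Icc a b ⊆ g ⁻¹' (Ioo (-2⁻¹:ℝ) 2⁻¹) ∩ Icc (-1) 1 := by
              intro x hx
              refine ⟨?_, hsub hx⟩
              have := habs x hx
              rw [abs_lt] at this
              exact ⟨this.1, this.2⟩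
            calc ENNReal.ofReal δ' = volume (Icc a b) := by
                  rw [Real.volume_Icc, hba]
              _ ≤ _ := measure_mono hsub2
          have hπAB : 2⁻¹ * ENNReal.ofReal δ' ≤ π ((Ioo (-2⁻¹:ℝ) 2⁻¹) ×ˢ (Ioo (-1:ℝ) 1)ᶜ) := by
            refine hmass.trans (prod_bound1 π _ _ h1 h2 _ _ hA hB ?_)
            rw [compl_compl]; exact nu_Ioo
          have hd : ∀ x ∈ Ioo (-2⁻¹:ℝ) 2⁻¹, ∀ y ∈ (Ioo (-1:ℝ) 1)ᶜ, (4:ℝ)⁻¹ ≤ (x - y)^2 := by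
            intro x hx y hy
            simp only [mem_compl_iff, mem_Ioo, not_and_or, not_lt] at hy
            obtain ⟨hx1, hx2⟩ := hx
            rcases hy with h | h <;> nlinarith
          calc ENNReal.ofReal 4⁻¹ * (2⁻¹ * ENNReal.ofReal δ')
              ≤ ENNReal.ofReal 4⁻¹ * π ((Ioo (-2⁻¹:ℝ) 2⁻¹) ×ˢ (Ioo (-1:ℝ) 1)ᶜ) := by gcongr
            _ ≤ _ := cost_lb π _ _ hA hB hd
      · -- |g| ≥ 1/2 on all of [-1,1]
        push_neg at hcase
        have hsign : (∀ x ∈ Icc (-1:ℝ) 1, g x ≤ -2⁻¹) ∨ (∀ x ∈ Icc (-1:ℝ) 1, 2⁻¹ ≤ g x) := by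
          have h0mem : (0:ℝ) ∈ Icc (-1:ℝ) 1 := by norm_num
          rcases le_or_gt (g 0) 0 with h | h
          · left
            intro x hx
            by_contra hgt
            push_neg at hgt
            have hgx : 2⁻¹ ≤ g x := by
              have := hcase x hx
              rcases abs_cases (g x) with ⟨he, _⟩ | ⟨he, _⟩ <;> linarith
            have hg0 : g 0 ≤ -2⁻¹ := by
              have := hcase 0 h0mem
              rcases abs_cases (g 0) with ⟨he, _⟩ | ⟨he, _⟩ <;> linarith
            have : (0:ℝ) ∈ uIcc (g 0) (g x) := by
              rw [Set.mem_uIcc]; left; constructor <;> linarith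
            obtain ⟨cc, hcc, hgcc⟩ := intermediate_value_uIcc (hgc.continuousOn (s := uIcc 0 x)) this
            have hccIcc : cc ∈ Icc (-1:ℝ) 1 := by
              obtain ⟨hx1, hx2⟩ := hx
              rcases Set.mem_uIcc.mp hcc with ⟨ha1, ha2⟩ | ⟨ha1, ha2⟩ <;>
                exact ⟨by linarith, by linarith⟩
            have := hcase cc hccIcc
            rw [hgcc] at this
            norm_num at this
          · right
            intro x hx
            by_contra hgt
            push_neg at hgt
            have hgx : g x ≤ -2⁻¹ := by
              have := hcase x hx
              rcases abs_cases (g x) with ⟨he, _⟩ | ⟨he, _⟩ <;> linarith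
            have hg0 : 2⁻¹ ≤ g 0 := by
              have := hcase 0 h0mem
              rcases abs_cases (g 0) with ⟨he, _⟩ | ⟨he, _⟩ <;> linarith
            have : (0:ℝ) ∈ uIcc (g 0) (g x) := by
              rw [Set.mem_uIcc]; right; constructor <;> linarith
            obtain ⟨cc, hcc, hgcc⟩ := intermediate_value_uIcc (hgc.continuousOn (s := uIcc 0 x)) this
            have hccIcc : cc ∈ Icc (-1:ℝ) 1 := by
              obtain ⟨hx1, hx2⟩ := hx
              rcases Set.mem_uIcc.mp hcc with ⟨ha1, ha2⟩ | ⟨ha1, ha2⟩ <;>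
                exact ⟨by linarith, by linarith⟩
            have := hcase cc hccIcc
            rw [hgcc] at this
            norm_num at this
        refine ⟨ENNReal.ofReal 4⁻¹ * 2⁻¹, ?_, ?_⟩
        · apply ENNReal.mul_pos <;> simp
        · intro π h1 h2
          rcases hsign with hneg | hpos
          · -- g ≤ -1/2 : use A = Iic (-1/2), B = Icc 1 2
            have hA : MeasurableSet (Iic (-2⁻¹:ℝ)) := measurableSet_Iic
            have hB : MeasurableSet (Icc (1:ℝ) 2) := measurableSet_Icc
            have hAc : (Measure.map g muUnif) (Iic (-2⁻¹:ℝ))ᶜ = 0 := by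
              rw [Measure.map_apply hgc.measurable hA.compl, muUnif]
              simp only [Measure.smul_apply, smul_eq_mul]
              rw [Measure.restrict_apply (hA.compl.preimage hgc.measurable)]
              have : g ⁻¹' (Iic (-2⁻¹:ℝ))ᶜ ∩ Icc (-1) 1 = ∅ := by
                rw [eq_empty_iff_forall_notMem]
                rintro x ⟨hx1, hx2⟩
                exact hx1 (hneg x hx2)
              rw [this]; simp
            have hπAB : (2⁻¹:ℝ≥0∞) ≤ π ((Iic (-2⁻¹:ℝ)) ×ˢ (Icc (1:ℝ) 2)) := by
              have := prod_bound2 π _ _ h1 h2 _ _ hA hB hAc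
              rw [nu_Icc12] at this
              exact this
            have hd : ∀ x ∈ Iic (-2⁻¹:ℝ), ∀ y ∈ Icc (1:ℝ) 2, (4:ℝ)⁻¹ ≤ (x - y)^2 := by
              intro x hx y hy
              simp only [mem_Iic] at hx
              obtain ⟨hy1, _⟩ := hy
              nlinarith
            calc ENNReal.ofReal 4⁻¹ * 2⁻¹
                ≤ ENNReal.ofReal 4⁻¹ * π ((Iic (-2⁻¹:ℝ)) ×ˢ (Icc (1:ℝ) 2)) := by gcongr
              _ ≤ _ := cost_lb π _ _ hA hB hd
          · have hA : MeasurableSet (Ici (2⁻¹:ℝ)) := measurableSet_Ici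
            have hB : MeasurableSet (Icc (-2:ℝ) (-1)) := measurableSet_Icc
            have hAc : (Measure.map g muUnif) (Ici (2⁻¹:ℝ))ᶜ = 0 := by
              rw [Measure.map_apply hgc.measurable hA.compl, muUnif]
              simp only [Measure.smul_apply, smul_eq_mul]
              rw [Measure.restrict_apply (hA.compl.preimage hgc.measurable)]
              have : g ⁻¹' (Ici (2⁻¹:ℝ))ᶜ ∩ Icc (-1) 1 = ∅ := by
                rw [eq_empty_iff_forall_notMem]
                rintro x ⟨hx1, hx2⟩
                exact hx1 (hpos x hx2)
              rw [this]; simp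
            have hπAB : (2⁻¹:ℝ≥0∞) ≤ π ((Ici (2⁻¹:ℝ)) ×ˢ (Icc (-2:ℝ) (-1))) := by
              have := prod_bound2 π _ _ h1 h2 _ _ hA hB hAc
              rw [nu_Icc_neg] at this
              exact this
            have hd : ∀ x ∈ Ici (2⁻¹:ℝ), ∀ y ∈ Icc (-2:ℝ) (-1), (4:ℝ)⁻¹ ≤ (x - y)^2 := by
              intro x hx y hy
              simp only [mem_Ici] at hx
              obtain ⟨_, hy2⟩ := hy
              nlinarith
            calc ENNReal.ofReal 4⁻¹ * 2⁻¹
                ≤ ENNReal.ofReal 4⁻¹ * π ((Ici (2⁻¹:ℝ)) ×ˢ (Icc (-2:ℝ) (-1))) := by gcongr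
              _ ≤ _ := cost_lb π _ _ hA hB hd
    -- contradiction
    have : m ≤ W2sq (Measure.map g muUnif) nuTarget := by
      rw [W2sq]
      exact le_iInf₂ fun π hπ => hbound π hπ.1 hπ.2
    rw [h0] at this
    exact hm.ne' (le_antisymm this zero_le)
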